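/- The intrinsic mean characterization holds for the two-point equal-weight case: for Hermitian positive definite p₁, p₂, the geodesic midpoint m = η(p₁,p₂,1/2) satisfies the Karcher equation Log_m(p₁) + Log_m(p₂) = 0. -/

import Mathlib

open Matrix
open scoped ComplexOrder Classical

/-- Matrix logarithm of a Hermitian (in particular HPD) matrix, via the spectral theorem. -/
noncomputable def mLog {d : ℕ} (A : Matrix (Fin d) (Fin d) ℂ) : Matrix (Fin d) (Fin d) ℂ :=
  if hA : A.IsHermitian then
    (hA.eigenvectorUnitary : Matrix (Fin d) (Fin d) ℂ) *
      Matrix.diagonal (fun i => (Real.log (hA.eigenvalues i) : ℂ)) *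
      (star hA.eigenvectorUnitary : Matrix (Fin d) (Fin d) ℂ)
  else 0

/-- Matrix exponential. -/
noncomputable def mExp {d : ℕ} (A : Matrix (Fin d) (Fin d) ℂ) : Matrix (Fin d) (Fin d) ℂ :=
  NormedSpace.exp A

/-- Hermitian positive (semi)definite square root. -/
noncomputable def msqrt {d : ℕ} (A : Matrix (Fin d) (Fin d) ℂ) : Matrix (Fin d) (Fin d) ℂ :=
  if hA : A.PosSemidef then (hA.1.eigenvectorUnitary : Matrix (Fin d) (Fin d) ℂ) *
    diagonal ((↑) ∘ (√·) ∘ hA.1.eigenvalues) * (star hA.1.eigenvectorUnitary : Matrix (Fin d) (Fin d) ℂ) else 1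

/-- Frobenius norm. -/
noncomputable def frobNorm {d : ℕ} (A : Matrix (Fin d) (Fin d) ℂ) : ℝ :=
  Real.sqrt ((Aᴴ * A).trace.re)

/-- Affine-invariant Riemannian distance. -/
noncomputable def deltaR {d : ℕ} (p₁ p₂ : Matrix (Fin d) (Fin d) ℂ) : ℝ :=
  frobNorm (mLog ((msqrt p₁)⁻¹ * p₂ * (msqrt p₁)⁻¹))

/-- Real matrix power of an HPD matrix: `x^t = Exp (t • Log x)`. -/
noncomputable def mPow {d : ℕ} (A : Matrix (Fin d) (Fin d) ℂ) (t : ℝ) : Matrix (Fin d) (Fin d) ℂ :=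
  mExp ((t : ℂ) • mLog A)

/-- Riemannian logarithmic map at `p`. -/
noncomputable def logMap {d : ℕ} (p q : Matrix (Fin d) (Fin d) ℂ) : Matrix (Fin d) (Fin d) ℂ :=
  msqrt p * mLog ((msqrt p)⁻¹ * q * (msqrt p)⁻¹) * msqrt p

/-- Riemannian exponential map at `p`. -/
noncomputable def expMap {d : ℕ} (p h : Matrix (Fin d) (Fin d) ℂ) : Matrix (Fin d) (Fin d) ℂ :=
  msqrt p * mExp ((msqrt p)⁻¹ * h * (msqrt p)⁻¹) * msqrt p

/-- Affine-invariant geodesic from `p₁` to `p₂`. -/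
noncomputable def geo {d : ℕ} (p₁ p₂ : Matrix (Fin d) (Fin d) ℂ) (t : ℝ) :
    Matrix (Fin d) (Fin d) ℂ :=
  msqrt p₁ * mPow ((msqrt p₁)⁻¹ * p₂ * (msqrt p₁)⁻¹) t * msqrt p₁

section Aux

variable {d : ℕ}

lemma mLog_eq_cfc {A : Matrix (Fin d) (Fin d) ℂ} (hA : A.IsHermitian) :
    mLog A = cfc Real.log A := by
  rw [hA.cfc_eq, mLog, dif_pos hA]
  rfl

lemma spectrum_pos_of_posDef {A : Matrix (Fin d) (Fin d) ℂ} (hA : A.PosDef) :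
    ∀ x ∈ spectrum ℝ A, 0 < x := by
  intro x hx
  obtain ⟨i, rfl⟩ := hA.isHermitian.spectrum_real_eq_range_eigenvalues ▸ hx
  exact hA.eigenvalues_pos i

lemma mLog_inv {A : Matrix (Fin d) (Fin d) ℂ} (hA : A.PosDef) : mLog A⁻¹ = -(mLog A) := by
  have hsa : IsSelfAdjoint A := hA.isHermitian
  have hu : IsUnit A := hA.isUnit
  have hcont : ContinuousOn Real.log
      ((·⁻¹) '' (spectrum ℝ ((hu.unit : (Matrix (Fin d) (Fin d) ℂ)ˣ) :
        Matrix (Fin d) (Fin d) ℂ))) := by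
    apply Real.continuousOn_log.mono
    rintro y ⟨x, hx, rfl⟩
    simp only [Set.mem_compl_iff, Set.mem_singleton_iff]
    have hxpos : 0 < x := spectrum_pos_of_posDef hA x (by simpa [hu.unit_spec] using hx)
    positivity
  have hsa' : IsSelfAdjoint ((hu.unit : (Matrix (Fin d) (Fin d) ℂ)ˣ) :
      Matrix (Fin d) (Fin d) ℂ) := by rw [hu.unit_spec]; exact hsa
  have h2 : cfc (fun x : ℝ => Real.log x⁻¹)
        ((hu.unit : (Matrix (Fin d) (Fin d) ℂ)ˣ) : Matrix (Fin d) (Fin d) ℂ) =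
      cfc Real.log ((↑(hu.unit⁻¹) : Matrix (Fin d) (Fin d) ℂ)) :=
    cfc_comp_inv Real.log hu.unit hcont hsa'
  have h2' : cfc Real.log A⁻¹ = cfc (fun x : ℝ => Real.log x⁻¹) A := by
    conv_lhs => rw [show A⁻¹ = ((hu.unit⁻¹ : (Matrix (Fin d) (Fin d) ℂ)ˣ) :
      Matrix (Fin d) (Fin d) ℂ) from by rw [Matrix.coe_units_inv, hu.unit_spec]]
    rw [← h2, hu.unit_spec]
  have e : cfc (fun x : ℝ => Real.log x⁻¹) A = -cfc Real.log A := by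
    rw [show (fun x : ℝ => Real.log x⁻¹) = fun x : ℝ => -Real.log x from
      funext fun x => by rw [Real.log_inv]]
    exact cfc_neg _ _
  rw [mLog_eq_cfc hA.inv.isHermitian, mLog_eq_cfc hA.isHermitian, h2', e]

lemma posDef_conj {A B : Matrix (Fin d) (Fin d) ℂ} (hA : A.PosDef) (hB : IsUnit B) :
    (B * A * Bᴴ).PosDef := by
  refine Matrix.PosDef.of_dotProduct_mulVec_pos
    (Matrix.isHermitian_mul_mul_conjTranspose B hA.isHermitian) fun x hx => ?_
  have hBH : IsUnit Bᴴ.det := by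
    rw [← Matrix.isUnit_iff_isUnit_det]
    exact (Matrix.isUnit_conjTranspose (A := B)).mpr hB
  have hx' : Bᴴ *ᵥ x ≠ 0 := by
    intro h
    apply hx
    have hrec : (Bᴴ)⁻¹ *ᵥ (Bᴴ *ᵥ x) = x := by
      rw [Matrix.mulVec_mulVec, Matrix.nonsing_inv_mul _ hBH, Matrix.one_mulVec]
    rw [h, Matrix.mulVec_zero] at hrec
    exact hrec.symm
  have h0 := hA.dotProduct_mulVec_pos hx'
  simp only [Matrix.star_mulVec, Matrix.dotProduct_mulVec, Matrix.vecMul_vecMul,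
    Matrix.conjTranspose_conjTranspose] at h0 ⊢
  exact h0

lemma posDef_of_posSemidef_isUnit {A : Matrix (Fin d) (Fin d) ℂ} (hA : A.PosSemidef)
    (hu : IsUnit A) : A.PosDef := by
  refine Matrix.PosDef.of_dotProduct_mulVec_pos hA.isHermitian
    fun x hx => lt_of_le_of_ne (hA.dotProduct_mulVec_nonneg x) fun h => hx ?_
  have h0 : A *ᵥ x = 0 := (hA.dotProduct_mulVec_zero_iff x).mp h.symm
  have hdet : IsUnit A.det := (Matrix.isUnit_iff_isUnit_det A).mp hu
  have hrec : A⁻¹ *ᵥ (A *ᵥ x) = x := by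
    rw [Matrix.mulVec_mulVec, Matrix.nonsing_inv_mul _ hdet, Matrix.one_mulVec]
  rw [h0, Matrix.mulVec_zero] at hrec
  exact hrec.symm

lemma msqrt_mul_self {A : Matrix (Fin d) (Fin d) ℂ} (hA : A.PosSemidef) :
    msqrt A * msqrt A = A := by
  have hc : msqrt A = cfc Real.sqrt A := by
    rw [hA.1.cfc_eq, msqrt, dif_pos hA]
    rfl
  rw [hc, ← cfc_mul Real.sqrt Real.sqrt A]
  conv_rhs => rw [← cfc_id ℝ A hA.1]
  apply cfc_congr
  intro x hx
  obtain ⟨i, rfl⟩ := hA.1.spectrum_real_eq_range_eigenvalues ▸ hx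
  exact Real.mul_self_sqrt (hA.eigenvalues_nonneg i)

lemma msqrt_posDef {A : Matrix (Fin d) (Fin d) ℂ} (hA : A.PosDef) : (msqrt A).PosDef := by
  have hps : (msqrt A).PosSemidef := by
    rw [msqrt, dif_pos hA.posSemidef]
    have hD : (diagonal ((↑) ∘ (√·) ∘ hA.posSemidef.1.eigenvalues) :
        Matrix (Fin d) (Fin d) ℂ).PosSemidef := by
      rw [Matrix.posSemidef_diagonal_iff]
      intro i
      simp only [Function.comp_apply, Complex.zero_le_real]
      exact Real.sqrt_nonneg _
    have h' := hD.mul_mul_conjTranspose_same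
      (hA.posSemidef.1.eigenvectorUnitary : Matrix (Fin d) (Fin d) ℂ)
    rwa [← Matrix.star_eq_conjTranspose] at h'
  refine posDef_of_posSemidef_isUnit hps ?_
  have hdet : IsUnit ((msqrt A).det * (msqrt A).det) := by
    rw [← Matrix.det_mul, msqrt_mul_self hA.posSemidef]
    exact (Matrix.isUnit_iff_isUnit_det A).mp hA.isUnit
  rw [Matrix.isUnit_iff_isUnit_det]
  exact isUnit_of_mul_isUnit_left hdet

lemma mExp_conj (U A : Matrix (Fin d) (Fin d) ℂ) (h : U * star U = 1) (h' : star U * U = 1) :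
    mExp (U * A * star U) = U * mExp A * star U := by
  let u : (Matrix (Fin d) (Fin d) ℂ)ˣ := ⟨U, star U, h, h'⟩
  exact Matrix.exp_units_conj u A

lemma mExp_diag (v : Fin d → ℂ) :
    mExp (Matrix.diagonal v) = Matrix.diagonal (fun i => Complex.exp (v i)) := by
  rw [mExp, Matrix.exp_diagonal, Pi.exp_def, Complex.exp_eq_exp_ℂ]

lemma mExp_mLog {A : Matrix (Fin d) (Fin d) ℂ} (hA : A.PosDef) : mExp (mLog A) = A := by
  have hH := hA.isHermitian
  set U : Matrix (Fin d) (Fin d) ℂ := (hH.eigenvectorUnitary : Matrix (Fin d) (Fin d) ℂ)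
    with hU
  have h1 : U * star U = 1 := Matrix.mem_unitaryGroup_iff.mp hH.eigenvectorUnitary.2
  have h2 : star U * U = 1 := Matrix.mem_unitaryGroup_iff'.mp hH.eigenvectorUnitary.2
  rw [mLog, dif_pos hH, mExp_conj _ _ h1 h2, mExp_diag]
  have he : (fun i => Complex.exp ((Real.log (hH.eigenvalues i) : ℂ)))
      = fun i => ((hH.eigenvalues i : ℝ) : ℂ) := by
    funext i
    rw [← Complex.ofReal_exp, Real.exp_log (hA.eigenvalues_pos i)]
  rw [he]
  have hs := hH.spectral_theorem
  rw [Unitary.conjStarAlgAut_apply] at hs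
  exact hs.symm

lemma mPow_posDef {A : Matrix (Fin d) (Fin d) ℂ} (hA : A.PosDef) (t : ℝ) :
    (mPow A t).PosDef := by
  have hH := hA.isHermitian
  set U : Matrix (Fin d) (Fin d) ℂ := (hH.eigenvectorUnitary : Matrix (Fin d) (Fin d) ℂ)
    with hU
  have h1 : U * star U = 1 := Matrix.mem_unitaryGroup_iff.mp hH.eigenvectorUnitary.2
  have h2 : star U * U = 1 := Matrix.mem_unitaryGroup_iff'.mp hH.eigenvectorUnitary.2
  have hsmul : (t : ℂ) • mLog A =
      U * Matrix.diagonal (fun i => ((t * Real.log (hH.eigenvalues i) : ℝ) : ℂ)) * star U := by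
    rw [mLog, dif_pos hH]
    rw [show (fun i => ((t * Real.log (hH.eigenvalues i) : ℝ) : ℂ))
        = (t : ℂ) • (fun i => ((Real.log (hH.eigenvalues i) : ℝ) : ℂ)) from
      funext fun i => by
        simp only [Pi.smul_apply, smul_eq_mul]
        push_cast
        ring]
    rw [Matrix.diagonal_smul, mul_smul_comm, smul_mul_assoc]
  rw [mPow, hsmul, mExp_conj _ _ h1 h2, mExp_diag]
  have hdiag : (Matrix.diagonal
      (fun i => Complex.exp (((t * Real.log (hH.eigenvalues i) : ℝ) : ℂ)))).PosDef := by
    apply Matrix.PosDef.diagonal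
    intro i
    rw [← Complex.ofReal_exp, Complex.zero_lt_real]
    exact Real.exp_pos _
  have hU_unit : IsUnit U := ⟨⟨U, star U, h1, h2⟩, rfl⟩
  have hconj := posDef_conj hdiag hU_unit
  rwa [← Matrix.star_eq_conjTranspose] at hconj

lemma mPow_half_mul {A : Matrix (Fin d) (Fin d) ℂ} (hA : A.PosDef) :
    mPow A (1/2) * mPow A (1/2) = A := by
  have hc : Commute (((1/2 : ℝ) : ℂ) • mLog A) (((1/2 : ℝ) : ℂ) • mLog A) := Commute.refl _
  rw [mPow, mExp, ← Matrix.exp_add_of_commute _ _ hc, ← add_smul]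
  have hhalf : ((1/2 : ℝ) : ℂ) + ((1/2 : ℝ) : ℂ) = 1 := by norm_num
  rw [hhalf, one_smul]
  exact mExp_mLog hA

end Aux

theorem geo_midpoint_karcher {d : ℕ} (p₁ p₂ : Matrix (Fin d) (Fin d) ℂ)
    (hp₁ : p₁.PosDef) (hp₂ : p₂.PosDef) :
    logMap (geo p₁ p₂ (1 / 2)) p₁ + logMap (geo p₁ p₂ (1 / 2)) p₂ = 0 := by
  -- basic objects
  set s : Matrix (Fin d) (Fin d) ℂ := msqrt p₁ with hs_def
  have hs_pd : s.PosDef := msqrt_posDef hp₁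
  have hs_mul : s * s = p₁ := msqrt_mul_self hp₁.posSemidef
  have hs_det : IsUnit s.det := (Matrix.isUnit_iff_isUnit_det s).mp hs_pd.isUnit
  have hs₁ : s * s⁻¹ = 1 := Matrix.mul_nonsing_inv s hs_det
  have hs₂ : s⁻¹ * s = 1 := Matrix.nonsing_inv_mul s hs_det
  set q : Matrix (Fin d) (Fin d) ℂ := s⁻¹ * p₂ * s⁻¹ with hq_def
  have hq_pd : q.PosDef := by
    have h := posDef_conj hp₂ hs_pd.inv.isUnit
    rwa [hs_pd.inv.isHermitian.eq] at h
  set h : Matrix (Fin d) (Fin d) ℂ := mPow q (1/2) with hh_def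
  have hh_pd : h.PosDef := mPow_posDef hq_pd _
  have hh_mul : h * h = q := mPow_half_mul hq_pd
  set m : Matrix (Fin d) (Fin d) ℂ := geo p₁ p₂ (1/2) with hm_def
  have hm_eq : m = s * h * s := rfl
  have hm_pd : m.PosDef := by
    rw [hm_eq]
    have h' := posDef_conj hh_pd hs_pd.isUnit
    rwa [hs_pd.isHermitian.eq] at h'
  set r : Matrix (Fin d) (Fin d) ℂ := msqrt m with hr_def
  have hr_pd : r.PosDef := msqrt_posDef hm_pd
  have hr_mul : r * r = m := msqrt_mul_self hm_pd.posSemidef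
  have hr_det : IsUnit r.det := (Matrix.isUnit_iff_isUnit_det r).mp hr_pd.isUnit
  have hr₁ : r * r⁻¹ = 1 := Matrix.mul_nonsing_inv r hr_det
  have hr₂ : r⁻¹ * r = 1 := Matrix.nonsing_inv_mul r hr_det
  -- cancellation helpers
  have cs₁ : ∀ X : Matrix (Fin d) (Fin d) ℂ, s * (s⁻¹ * X) = X := fun X => by
    rw [← mul_assoc, hs₁, one_mul]
  have cs₂ : ∀ X : Matrix (Fin d) (Fin d) ℂ, s⁻¹ * (s * X) = X := fun X => by
    rw [← mul_assoc, hs₂, one_mul]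
  have cr₂ : ∀ X : Matrix (Fin d) (Fin d) ℂ, r⁻¹ * (r * X) = X := fun X => by
    rw [← mul_assoc, hr₂, one_mul]
  have chh : ∀ X : Matrix (Fin d) (Fin d) ℂ, h * (h * X) = s⁻¹ * (p₂ * (s⁻¹ * X)) := fun X => by
    rw [← mul_assoc, hh_mul, hq_def]
    simp only [mul_assoc]
  -- key geometric-mean identity
  have key : m * p₁⁻¹ * m = p₂ := by
    rw [hm_eq, ← hs_mul, Matrix.mul_inv_rev]
    simp only [mul_assoc, cs₁, cs₂, chh, hs₂, mul_one]
  set X : Matrix (Fin d) (Fin d) ℂ := r⁻¹ * p₁ * r⁻¹ with hX_def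
  have hX_pd : X.PosDef := by
    have h' := posDef_conj hp₁ hr_pd.inv.isUnit
    rwa [hr_pd.inv.isHermitian.eq] at h'
  have hX2 : r⁻¹ * p₂ * r⁻¹ = X⁻¹ := by
    rw [hX_def, Matrix.mul_inv_rev, Matrix.mul_inv_rev,
      Matrix.nonsing_inv_nonsing_inv r hr_det, ← key, ← hr_mul]
    simp only [mul_assoc, cr₂, hr₁, mul_one]
  -- assemble
  have e₁ : logMap m p₁ = r * mLog X * r := by
    rw [logMap, ← hr_def, hX_def]
  have e₂ : logMap m p₂ = r * mLog X⁻¹ * r := by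
    rw [logMap, ← hr_def, hX2]
  rw [e₁, e₂, mLog_inv hX_pd, mul_neg, neg_mul, add_neg_cancel]
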